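/- For every arborescence T of G' rooted at u with d_T(u,v) > k·ℓ(u,v), the LP solution satisfies Σ_{e ∈ S_T} x_e ≥ 1. -/

import Mathlib

/-- `p` is a directed path from `u` to `v` along relation `R`. -/
def IsPathFrom {V : Type} (R : V → V → Prop) (u v : V) (p : List V) : Prop :=
  p ≠ [] ∧ p.head? = some u ∧ p.getLast? = some v ∧ p.Chain' R

/-- Total length of a path, summing edge lengths over consecutive pairs. -/
def pathLen {V : Type} (ℓ : V → V → ℝ) (p : List V) : ℝ :=
  ((p.zip p.tail).map fun e => ℓ e.1 e.2).sum


lemma chain'_mem_zip {V : Type} {R : V → V → Prop} :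
    ∀ {p : List V}, p.Chain' R → ∀ e ∈ p.zip p.tail, R e.1 e.2
  | [], _, e, he => by simp at he
  | [a], _, e, he => by simp at he
  | a :: b :: t, h, e, he => by
    replace h := List.isChain_cons_cons.1 h
    simp only [List.tail_cons, List.zip_cons_cons, List.mem_cons] at he
    rcases he with rfl | he
    · exact h.1
    · exact chain'_mem_zip h.2 e (by simpa using he)

lemma relax_bound {V : Type} (L : V → ℝ) (ℓ : V → V → ℝ) :
    ∀ (p : List V) (a : V),
      (∀ e ∈ (a :: p).zip ((a :: p).tail), L e.2 ≤ L e.1 + ℓ e.1 e.2) →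
      L ((a :: p).getLast (by simp)) ≤ L a + pathLen ℓ (a :: p)
  | [], a, _ => by simp [pathLen]
  | b :: t, a, h => by
    have h1 : L b ≤ L a + ℓ a b := h (a, b) (by simp)
    have h2 := relax_bound L ℓ t b (fun e he => h e (by simp only [List.tail_cons, List.zip_cons_cons, List.mem_cons]; right; simpa using he))
    have hgl : (a :: b :: t).getLast (by simp) = (b :: t).getLast (by simp) := by
      simp [List.getLast_cons]
    rw [hgl]
    have hpl : pathLen ℓ (a :: b :: t) = ℓ a b + pathLen ℓ (b :: t) := by
      simp [pathLen]
    rw [hpl]; linarith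

/-- An arborescence on the vertex set `S`, rooted at `u`, in the graph with
edge relation `E`; `L w = d_T(u,w)` is the tree distance from the root. -/
structure Arborescence {V : Type} (S : Set V) (E : V → V → Prop)
    (ℓ : V → V → ℝ) (u : V) where
  par : V → V
  L : V → ℝ
  root_mem : u ∈ S
  par_root : par u = u
  par_mem : ∀ w ∈ S, par w ∈ S
  reach : ∀ w ∈ S, ∃ j, par^[j] w = u
  edge : ∀ w ∈ S, w ≠ u → E (par w) w
  L_root : L u = 0
  L_step : ∀ w ∈ S, w ≠ u → L w = L (par w) + ℓ (par w) w

/-- Claim 2: let `G'` be the subgraph of `G` induced on `𝒱_{u,v}`, the union of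
the vertices of all `u`–`v` paths of length at most `k·ℓ(u,v)`. For every
arborescence `T` of `G'` rooted at `u` with `d_T(u,v) > k·ℓ(u,v)`, a feasible
LP solution `(x,f)` satisfies `Σ_{e ∈ S_T} x_e ≥ 1`. -/
theorem stmt4 {V : Type} [Fintype V] [DecidableEq V]
    (E : Finset (V × V)) (ℓ : V → V → ℝ) (hℓ : ∀ a b, 0 ≤ ℓ a b)
    (u v : V) (huv : (u, v) ∈ E) (k : ℝ) (hk : 1 ≤ k)
    (P : Finset (List V))
    (hP : ∀ p ∈ P, IsPathFrom (fun a b => (a, b) ∈ E) u v p ∧ pathLen ℓ p ≤ k * ℓ u v)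
    (x : V × V → ℝ) (f : List V → ℝ)
    (hx : ∀ e ∈ E, 0 ≤ x e) (hf : ∀ p ∈ P, 0 ≤ f p)
    (hcap : ∀ e ∈ E, ∑ p ∈ P.filter (fun p => e ∈ p.zip p.tail), f p ≤ x e)
    (hdem : 1 ≤ ∑ p ∈ P, f p)
    -- the induced subgraph `G' = G[𝒱_{u,v}]`
    (V' : Finset V) (hV' : V' = P.biUnion List.toFinset)
    (E' : Finset (V × V)) (hE' : E' = E.filter (fun e => e.1 ∈ V' ∧ e.2 ∈ V'))
    (T : Arborescence (↑V' : Set V) (fun a b => (a, b) ∈ E') ℓ u)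
    (hT : k * ℓ u v < T.L v) :
    1 ≤ ∑ e ∈ E'.filter (fun e => T.L e.1 + ℓ e.1 e.2 < T.L e.2), x e := by
  classical
  set S := E'.filter (fun e => T.L e.1 + ℓ e.1 e.2 < T.L e.2) with hS
  -- every path in P contains an edge of S
  have key : ∀ p ∈ P, ∃ e ∈ S, e ∈ p.zip p.tail := by
    intro p hp
    obtain ⟨⟨hne, hhead, hlast, hchain⟩, hlen⟩ := hP p hp
    -- all vertices of p are in V'
    have hmemV : ∀ w ∈ p, w ∈ V' := by
      intro w hw
      rw [hV']
      exact Finset.mem_biUnion.2 ⟨p, hp, List.mem_toFinset.2 hw⟩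
    have hedgeE' : ∀ e ∈ p.zip p.tail, e ∈ E' := by
      intro e he
      have hE : (e.1, e.2) ∈ E := chain'_mem_zip hchain e he
      obtain ⟨h1, h2⟩ := List.of_mem_zip he
      rw [hE']
      exact Finset.mem_filter.2 ⟨hE, hmemV _ h1, hmemV _ (List.mem_of_mem_tail h2)⟩
    by_contra hcon
    push_neg at hcon
    have hrelax : ∀ e ∈ p.zip p.tail, T.L e.2 ≤ T.L e.1 + ℓ e.1 e.2 := by
      intro e he
      have := hcon e
      have hE' := hedgeE' e he
      by_contra hlt
      push_neg at hlt
      exact hcon e (Finset.mem_filter.2 ⟨hE', hlt⟩) he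
    obtain ⟨a, q, rfl⟩ := List.exists_cons_of_ne_nil hne
    have ha : a = u := by simpa using hhead
    subst ha
    have hv : (a :: q).getLast (by simp) = v :=
      Option.some_injective _ (((List.getLast?_eq_getLast (l := a :: q) (by simp)).symm.trans hlast))
    have hb := relax_bound T.L ℓ q a hrelax
    rw [hv, T.L_root] at hb
    linarith
  -- sum manipulation
  have hSE : ∀ e ∈ S, e ∈ E := by
    intro e he
    have h1 := (Finset.mem_filter.1 he).1
    rw [hE'] at h1
    exact (Finset.mem_filter.1 h1).1
  calc (1:ℝ) ≤ ∑ p ∈ P, f p := hdem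
    _ ≤ ∑ p ∈ P, ∑ e ∈ S, (if e ∈ p.zip p.tail then f p else 0) := by
        apply Finset.sum_le_sum
        intro p hp
        obtain ⟨e₀, he₀S, he₀p⟩ := key p hp
        calc f p = (if e₀ ∈ p.zip p.tail then f p else 0) := by simp [he₀p]
          _ ≤ ∑ e ∈ S, (if e ∈ p.zip p.tail then f p else 0) :=
            Finset.single_le_sum (f := fun e => if e ∈ p.zip p.tail then f p else 0)
              (fun e _ => by by_cases h : e ∈ p.zip p.tail <;> simp [h, hf p hp]) he₀S
    _ = ∑ e ∈ S, ∑ p ∈ P, (if e ∈ p.zip p.tail then f p else 0) := by rw [Finset.sum_comm]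
    _ ≤ ∑ e ∈ S, x e := by
        apply Finset.sum_le_sum
        intro e he
        rw [← Finset.sum_filter]
        exact hcap e (hSE e he)
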